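/- No relative equilibria below the excited energy with large angular momentum (equal-mass three-body): let α > 2, ω > 0, m₁ = m₂ = m₃ = 1, and set E*(ω) = 2(α/2 − 1)(1 + 2^{−(α+1)})^{2/(α+2)} (α/ω²)^{−α/(α+2)} and A*(ω) = 2[α(1 + 2^{−(α+1)})]^{2/(α+2)} ω^{(α−2)/(α+2)} (the energy and angular momentum magnitude of the collinear relative equilibrium with frequency ω). Then the set K(ω) = {(x,ẋ) : E(x,ẋ) < E*(ω) and |A(x,ẋ)| ≥ A*(ω)} contains no relative equilibrium: for every frequency ω₁ > 0, neither the collinear nor the equilateral relative equilibrium with frequency ω₁ lies in K(ω). -/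
import Mathlib


/- STATEMENT 19: no relative equilibria below the excited energy with large angular momentum
(equal-mass three-body problem, α > 2): with E*(ω), A*(ω) the energy and angular momentum of
the collinear relative equilibrium of frequency ω, no collinear nor equilateral relative
equilibrium of any frequency ω₁ > 0 satisfies both E < E*(ω) and |A| ≥ A*(ω). -/

namespace NBodyPaper

open Real

/-- Energy of the collinear (Euler) relative equilibrium of frequency `w`
for masses `m₁ = m₂ = m₃ = 1`. -/
noncomputable def Elinear (α w : ℝ) : ℝ :=
  2 * (α / 2 - 1) * (1 + 2 ^ (-(α + 1))) ^ (2 / (α + 2)) * (α / w ^ 2) ^ (-(α / (α + 2)))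

/-- Angular momentum magnitude of the collinear (Euler) relative equilibrium of
frequency `w`. -/
noncomputable def Alinear (α w : ℝ) : ℝ :=
  2 * (α * (1 + 2 ^ (-(α + 1)))) ^ (2 / (α + 2)) * w ^ ((α - 2) / (α + 2))

/-- Energy of the equilateral (Lagrange) relative equilibrium of frequency `w`. -/
noncomputable def Etriangle (α w : ℝ) : ℝ :=
  2 * (α / 2 - 1) * ((3 : ℝ) / 2) ^ (2 / (α + 2)) * (α / w ^ 2) ^ (-(α / (α + 2)))

/-- Angular momentum magnitude of the equilateral (Lagrange) relative equilibrium of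
frequency `w`. -/
noncomputable def Atriangle (α w : ℝ) : ℝ :=
  (α * ((3 : ℝ) / 2)) ^ (2 / (α + 2)) * w ^ ((α - 2) / (α + 2))

/-- `(α / w²)^(-(α/(α+2))) = α^(-(α/(α+2))) * w^(2*(α/(α+2)))` for `α, w > 0`. -/
lemma rpow_base_helper (α w : ℝ) (hα : 0 < α) (hw : 0 < w) :
    (α / w ^ 2) ^ (-(α / (α + 2))) = α ^ (-(α / (α + 2))) * w ^ (2 * (α / (α + 2))) := by
  set γ := α / (α + 2) with hγ
  have hw2 : (0:ℝ) < w ^ 2 := by positivity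
  rw [Real.div_rpow hα.le hw2.le]
  rw [show w ^ 2 = w ^ (2:ℝ) by rw [← Real.rpow_natCast w 2]; norm_num]
  rw [← Real.rpow_mul hw.le]
  rw [show (2:ℝ) * -γ = -(2 * γ) by ring, Real.rpow_neg hw.le]
  rw [div_eq_mul_inv, inv_inv]

/-- **No relative equilibrium lies in `K(ω) = {E < E*(ω), |A| ≥ A*(ω)}`** for the
equal-mass three-body problem with `α > 2`, where `E*(ω) = Elinear α ω` and
`A*(ω) = Alinear α ω`: for every frequency `ω₁ > 0`, neither the collinear nor the
equilateral relative equilibrium with frequency `ω₁` satisfies both constraints. -/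
theorem no_relative_equilibrium_in_K (α ω : ℝ) (hα : 2 < α) (hω : 0 < ω) :
    ∀ ω₁ : ℝ, 0 < ω₁ →
      ¬(Elinear α ω₁ < Elinear α ω ∧ Alinear α ω ≤ Alinear α ω₁) ∧
      ¬(Etriangle α ω₁ < Elinear α ω ∧ Alinear α ω ≤ Atriangle α ω₁) := by
  intro ω₁ hω₁
  have hαpos : (0:ℝ) < α := by linarith
  have hα2 : (0:ℝ) < α + 2 := by linarith
  have hβ : (0:ℝ) < 2 / (α + 2) := by positivity
  have hγ : (0:ℝ) < α / (α + 2) := by positivity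
  have hp : (0:ℝ) < 2 * (α / (α + 2)) := by positivity
  have hq : (0:ℝ) < (α - 2) / (α + 2) := div_pos (by linarith) hα2
  have hcl1 : (1:ℝ) < 1 + 2 ^ (-(α + 1)) := by
    have : (0:ℝ) < (2:ℝ) ^ (-(α + 1)) := Real.rpow_pos_of_pos two_pos _
    linarith
  have hclpos : (0:ℝ) < 1 + 2 ^ (-(α + 1)) := by linarith
  set a : ℝ := (1 + 2 ^ (-(α + 1))) ^ (2 / (α + 2)) with ha_def
  set b : ℝ := ((3:ℝ) / 2) ^ (2 / (α + 2)) with hb_def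
  have hapos : 0 < a := Real.rpow_pos_of_pos hclpos _
  have hbpos : 0 < b := Real.rpow_pos_of_pos (by norm_num) _
  have ha1 : (1:ℝ) ≤ a := Real.one_le_rpow hcl1.le hβ.le
  have hC : (0:ℝ) < 2 * (α / 2 - 1) * α ^ (-(α / (α + 2))) := by
    have h1 : (0:ℝ) < α / 2 - 1 := by linarith
    have h2 : (0:ℝ) < α ^ (-(α / (α + 2))) := Real.rpow_pos_of_pos hαpos _
    positivity
  have hM : (0:ℝ) < α ^ (2 / (α + 2)) := Real.rpow_pos_of_pos hαpos _
  -- key inequality: b < 2 ^ (2 * (α/(α+2))) * a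
  have hkey : b < 2 ^ (2 * (α / (α + 2))) * a := by
    have h1 : b < (2:ℝ) ^ (2 / (α + 2)) :=
      Real.rpow_lt_rpow (by norm_num) (by norm_num) hβ
    have h2 : (2:ℝ) ^ (2 / (α + 2)) < 2 ^ (2 * (α / (α + 2))) := by
      apply Real.rpow_lt_rpow_of_exponent_lt one_lt_two
      rw [show 2 * (α / (α + 2)) = 2 * α / (α + 2) by ring, div_lt_div_iff₀ hα2 hα2]
      nlinarith
    have h3 : (2:ℝ) ^ (2 * (α / (α + 2))) ≤ 2 ^ (2 * (α / (α + 2))) * a := by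
      nlinarith [Real.rpow_pos_of_pos two_pos (2 * (α / (α + 2)))]
    linarith
  constructor
  · -- collinear case
    rintro ⟨hE, hA⟩
    -- from energy: ω₁ < ω
    have hE' : ω₁ ^ (2 * (α / (α + 2))) < ω ^ (2 * (α / (α + 2))) := by
      unfold Elinear at hE
      rw [rpow_base_helper α ω₁ hαpos hω₁, rpow_base_helper α ω hαpos hω] at hE
      have e1 : ∀ w : ℝ, 2 * (α / 2 - 1) * a *
          (α ^ (-(α / (α + 2))) * w ^ (2 * (α / (α + 2)))) =
          (2 * (α / 2 - 1) * α ^ (-(α / (α + 2))) * a) * w ^ (2 * (α / (α + 2))) := by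
        intro w; ring
      rw [e1, e1] at hE
      exact lt_of_mul_lt_mul_left hE (by positivity)
    have hw12 : ω₁ < ω := by
      have := (Real.rpow_lt_rpow_iff hω₁.le hω.le hp).mp hE'
      exact this
    -- from angular momentum: ω ≤ ω₁
    have hA' : ω ^ ((α - 2) / (α + 2)) ≤ ω₁ ^ ((α - 2) / (α + 2)) := by
      unfold Alinear at hA
      have hpos : (0:ℝ) < 2 * (α * (1 + 2 ^ (-(α + 1)))) ^ (2 / (α + 2)) := by
        have := Real.rpow_pos_of_pos (mul_pos hαpos hclpos) (2 / (α + 2))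
        linarith
      exact le_of_mul_le_mul_left hA hpos
    have : ω ≤ ω₁ := (Real.rpow_le_rpow_iff hω.le hω₁.le hq).mp hA'
    linarith
  · -- equilateral case
    rintro ⟨hE, hA⟩
    -- from energy: b * ω₁^p < a * ω^p
    have hE' : b * ω₁ ^ (2 * (α / (α + 2))) < a * ω ^ (2 * (α / (α + 2))) := by
      unfold Etriangle Elinear at hE
      rw [rpow_base_helper α ω₁ hαpos hω₁, rpow_base_helper α ω hαpos hω] at hE
      have e1 : ∀ c w : ℝ, 2 * (α / 2 - 1) * c *
          (α ^ (-(α / (α + 2))) * w ^ (2 * (α / (α + 2)))) =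
          (2 * (α / 2 - 1) * α ^ (-(α / (α + 2)))) * (c * w ^ (2 * (α / (α + 2)))) := by
        intro c w; ring
      rw [e1, e1] at hE
      exact lt_of_mul_lt_mul_left hE hC.le
    -- from angular momentum: 2 * a * ω^q ≤ b * ω₁^q
    have hA' : 2 * a * ω ^ ((α - 2) / (α + 2)) ≤ b * ω₁ ^ ((α - 2) / (α + 2)) := by
      unfold Alinear Atriangle at hA
      rw [Real.mul_rpow hαpos.le hclpos.le, Real.mul_rpow hαpos.le (by norm_num)] at hA
      have e1 : 2 * (α ^ (2 / (α + 2)) * a) * ω ^ ((α - 2) / (α + 2)) =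
          α ^ (2 / (α + 2)) * (2 * a * ω ^ ((α - 2) / (α + 2))) := by ring
      have e2 : α ^ (2 / (α + 2)) * b * ω₁ ^ ((α - 2) / (α + 2)) =
          α ^ (2 / (α + 2)) * (b * ω₁ ^ ((α - 2) / (α + 2))) := by ring
      rw [e1, e2] at hA
      exact le_of_mul_le_mul_left hA hM
    -- raise energy inequality to power q, momentum to power p
    set p : ℝ := 2 * (α / (α + 2)) with hp_def
    set q : ℝ := (α - 2) / (α + 2) with hq_def
    have hw1p : (0:ℝ) < ω₁ ^ p := Real.rpow_pos_of_pos hω₁ _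
    have hwp : (0:ℝ) < ω ^ p := Real.rpow_pos_of_pos hω _
    have hw1q : (0:ℝ) < ω₁ ^ q := Real.rpow_pos_of_pos hω₁ _
    have hwq : (0:ℝ) < ω ^ q := Real.rpow_pos_of_pos hω _
    have hP1 : (b * ω₁ ^ p) ^ q < (a * ω ^ p) ^ q :=
      Real.rpow_lt_rpow (by positivity) hE' hq
    have hP2 : (2 * a * ω ^ q) ^ p ≤ (b * ω₁ ^ q) ^ p :=
      Real.rpow_le_rpow (by positivity) hA' hp.le
    -- expand the products
    have expand1 : (b * ω₁ ^ p) ^ q = b ^ q * ω₁ ^ (p * q) := by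
      rw [Real.mul_rpow hbpos.le hw1p.le, ← Real.rpow_mul hω₁.le]
    have expand2 : (a * ω ^ p) ^ q = a ^ q * ω ^ (p * q) := by
      rw [Real.mul_rpow hapos.le hwp.le, ← Real.rpow_mul hω.le]
    have expand3 : (2 * a * ω ^ q) ^ p = 2 ^ p * a ^ p * ω ^ (p * q) := by
      rw [Real.mul_rpow (by positivity) hwq.le, Real.mul_rpow (by norm_num) hapos.le,
        ← Real.rpow_mul hω.le, mul_comm q p]
    have expand4 : (b * ω₁ ^ q) ^ p = b ^ p * ω₁ ^ (p * q) := by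
      rw [Real.mul_rpow hbpos.le hw1q.le, ← Real.rpow_mul hω₁.le, mul_comm q p]
    rw [expand1, expand2] at hP1
    rw [expand3, expand4] at hP2
    -- use p = q + 1 to rewrite a^p = a^q * a, b^p = b^q * b
    have hpq : p = q + 1 := by
      rw [hp_def, hq_def]; field_simp; ring
    have hap : a ^ p = a ^ q * a := by
      rw [hpq, Real.rpow_add hapos, Real.rpow_one]
    have hbp : b ^ p = b ^ q * b := by
      rw [hpq, Real.rpow_add hbpos, Real.rpow_one]
    rw [hap, hbp] at hP2
    -- derive contradiction: 2^p * a < b but hkey says b < 2^p * a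
    have haq : (0:ℝ) < a ^ q := Real.rpow_pos_of_pos hapos _
    have hbq : (0:ℝ) < b ^ q := Real.rpow_pos_of_pos hbpos _
    have hu : (0:ℝ) < ω ^ (p * q) := Real.rpow_pos_of_pos hω _
    have hu1 : (0:ℝ) < ω₁ ^ (p * q) := Real.rpow_pos_of_pos hω₁ _
    have h2p : (0:ℝ) < (2:ℝ) ^ p := Real.rpow_pos_of_pos two_pos _
    -- hP1 : b^q * ω₁^(pq) < a^q * ω^(pq)
    -- hP2 : 2^p * (a^q * a) * ω^(pq) ≤ b^q * b * ω₁^(pq)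
    -- multiply hP1 by b > 0 and chain
    have h3 : b ^ q * ω₁ ^ (p * q) * b < a ^ q * ω ^ (p * q) * b :=
      mul_lt_mul_of_pos_right hP1 hbpos
    have h4 : (a ^ q * ω ^ (p * q)) * (2 ^ p * a) < (a ^ q * ω ^ (p * q)) * b := by
      calc (a ^ q * ω ^ (p * q)) * (2 ^ p * a)
          = 2 ^ p * (a ^ q * a) * ω ^ (p * q) := by ring
        _ ≤ b ^ q * b * ω₁ ^ (p * q) := hP2
        _ = b ^ q * ω₁ ^ (p * q) * b := by ring
        _ < a ^ q * ω ^ (p * q) * b := h3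
        _ = (a ^ q * ω ^ (p * q)) * b := by ring
    have h5 : (2:ℝ) ^ p * a < b := lt_of_mul_lt_mul_left h4 (by positivity)
    linarith
  
end NBodyPaper
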